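/- If a ℂ-derivation D of π₀ commutes with all the derivations Q_i, i.e. D ∘ Q_i = Q_i ∘ D for every i ∈ {0, …, l}, then D = 0. (There are no nonzero 𝔫₊-invariant vector fields on N₊/A₊.) -/

import Mathlib

open MvPolynomial

noncomputable section

/-- The algebra of differential polynomials in the variables `u_i^{(n)}`, `1 ≤ i ≤ l`, `n ≥ 0`. -/
abbrev Pi0 (l : ℕ) : Type := MvPolynomial (Fin l × ℕ) ℂ

/-- The variable `u_i^{(n)}`. -/
def u {l : ℕ} (i : Fin l) (n : ℕ) : Pi0 l := X (i, n)

/-- The derivation `∂` with `∂ u_i^{(n)} = u_i^{(n+1)}`. -/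
def pa (l : ℕ) : Derivation ℂ (Pi0 l) (Pi0 l) :=
  mkDerivation ℂ (fun p => X (p.1, p.2 + 1))

/-- An affine generalized Cartan matrix of size `(l+1) × (l+1)`: an indecomposable integer
matrix with `a_{ii} = 2`, `a_{ij} ≤ 0` for `i ≠ j`, `a_{ij} = 0 ↔ a_{ji} = 0`, symmetrizable
by positive rationals `d_i`, and admitting a vector of positive integer labels `(a_0,…,a_l)`
with `∑_j a_j a_{ij} = 0` for all `i`. -/
structure AffineGCM (l : ℕ) where
  A : Matrix (Fin (l+1)) (Fin (l+1)) ℤ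
  diag : ∀ i, A i i = 2
  offdiag : ∀ i j, i ≠ j → A i j ≤ 0
  zeroIff : ∀ i j, A i j = 0 ↔ A j i = 0
  d : Fin (l+1) → ℚ
  d_pos : ∀ i, 0 < d i
  dsymm : ∀ i j, d i * A i j = d j * A j i
  label : Fin (l+1) → ℕ
  label_pos : ∀ i, 0 < label i
  null : ∀ i, ∑ j, (label j : ℤ) * A i j = 0
  indec : ∀ S : Set (Fin (l+1)), (∀ i ∈ S, ∀ j ∉ S, A i j = 0) → S = ∅ ∨ S = Set.univ

namespace AffineGCM

variable {l : ℕ} (K : AffineGCM l)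

/-- The symmetrized bilinear form `(α_i, α_j) := d_i a_{ij}`. -/
def B (i j : Fin (l+1)) : ℂ := (K.d i : ℂ) * (K.A i j : ℂ)

/-- `u_j^{(n)}` for `j = 0,…,l`, where `u_0^{(n)} := -(1/a_0) ∑_{i=1}^l a_i u_i^{(n)}`.
Here `j = 0` is `Fin.cases`' zero case and `j = i.succ` corresponds to `u_i^{(n)}`. -/
def Uv (j : Fin (l+1)) (n : ℕ) : Pi0 l :=
  Fin.cases (-(1 / (K.label 0 : ℂ)) • ∑ i : Fin l, (K.label i.succ : ℂ) • u i n)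
    (fun i => u i n) j

/-- The Faà di Bruno polynomials: `B_i^{(0)} = 1`,
`B_i^{(n+1)} = -u_i^{(0)} B_i^{(n)} + ∂ B_i^{(n)}`. -/
def FdB (i : Fin (l+1)) : ℕ → Pi0 l
  | 0 => 1
  | n+1 => -(K.Uv i 0) * FdB i n + pa l (FdB i n)

/-- The unique `ℂ`-derivation `Q_i` of `π₀` with `Q_i u_j^{(n)} = -(α_i,α_j) B_i^{(n)}`
for `1 ≤ j ≤ l`, `n ≥ 0`. -/
def Q (i : Fin (l+1)) : Derivation ℂ (Pi0 l) (Pi0 l) :=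
  mkDerivation ℂ (fun p => -(K.B i p.1.succ) • K.FdB i p.2)

end AffineGCM
namespace AffineGCM

variable {l : ℕ} (K : AffineGCM l)

def aQ (i : Fin (l+1)) : ℚ := (K.label i : ℚ)

lemma aQ_pos (i : Fin (l+1)) : 0 < K.aQ i := by
  unfold aQ; exact_mod_cast K.label_pos i

lemma nullQ (i : Fin (l+1)) : ∑ j, K.aQ j * (K.A i j : ℚ) = 0 := by
  have h := K.null i
  have h2 : ((∑ j, (K.label j : ℤ) * K.A i j : ℤ) : ℚ) = 0 := by rw [h]; norm_num
  push_cast at h2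
  simpa [aQ] using h2

lemma leftnullQ (k : Fin (l+1)) : ∑ i, (K.d i * K.aQ i) * (K.A i k : ℚ) = 0 := by
  have h : ∀ i, (K.d i * K.aQ i) * (K.A i k : ℚ) = K.d k * (K.aQ i * (K.A k i : ℚ)) := by
    intro i
    have hs := K.dsymm i k
    linear_combination K.aQ i * hs
  rw [Finset.sum_congr rfl (fun i _ => h i), ← Finset.mul_sum, K.nullQ k, mul_zero]

lemma kerA (c : Fin (l+1) → ℚ) (hc : ∀ i, ∑ j, (K.A i j : ℚ) * c j = 0) :
    ∃ μ : ℚ, ∀ i, c i = μ * K.aQ i := by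
  set z : Fin (l+1) → ℚ := fun i => c i / K.aQ i with hzdef
  have hcz : ∀ i, c i = K.aQ i * z i := by
    intro i
    show c i = K.aQ i * (c i / K.aQ i)
    rw [mul_comm, div_mul_cancel₀ _ (K.aQ_pos i).ne']
  set t : Fin (l+1) → Fin (l+1) → ℚ :=
    fun i j => (-(K.d i * (K.A i j : ℚ))) * (K.aQ i * K.aQ j) * (z i - z j)^2 with htdef
  have hrow : ∀ i, ∑ j, t i j
      = ∑ j, -((K.aQ j * (z j)^2) * ((K.d i * K.aQ i) * (K.A i j : ℚ))) := by
    intro i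
    have expand : ∀ j, t i j =
        -((K.aQ j * (z j)^2) * ((K.d i * K.aQ i) * (K.A i j : ℚ)))
        + (-(K.d i * K.aQ i) * (z i)^2) * (K.aQ j * (K.A i j : ℚ))
        + (2 * K.d i * K.aQ i * z i) * ((K.A i j : ℚ) * (K.aQ j * z j)) := by
      intro j; simp only [htdef]; ring
    rw [Finset.sum_congr rfl (fun j _ => expand j), Finset.sum_add_distrib,
      Finset.sum_add_distrib, ← Finset.mul_sum, ← Finset.mul_sum, K.nullQ i]
    have h2 : ∑ j, (K.A i j : ℚ) * (K.aQ j * z j) = ∑ j, (K.A i j : ℚ) * c j := by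
      refine Finset.sum_congr rfl fun j _ => ?_
      rw [hcz j]
    rw [h2, hc i]
    ring
  have hS : ∑ i, ∑ j, t i j = 0 := by
    rw [Finset.sum_congr rfl (fun i _ => hrow i), Finset.sum_comm]
    refine Finset.sum_eq_zero fun j _ => ?_
    have : ∑ i, -((K.aQ j * (z j)^2) * ((K.d i * K.aQ i) * (K.A i j : ℚ)))
        = -((K.aQ j * (z j)^2) * ∑ i, (K.d i * K.aQ i) * (K.A i j : ℚ)) := by
      rw [Finset.mul_sum, ← Finset.sum_neg_distrib]
    rw [this, K.leftnullQ j, mul_zero, neg_zero]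
  have htnn : ∀ i j, 0 ≤ t i j := by
    intro i j
    rcases eq_or_ne i j with rfl | hij
    · simp [htdef]
    · have h1 : (0:ℚ) ≤ -(K.A i j : ℚ) := by
        have := K.offdiag i j hij
        have : (K.A i j : ℚ) ≤ 0 := by exact_mod_cast this
        linarith
      have h2 : (0:ℚ) ≤ K.d i := (K.d_pos i).le
      have h3 : (0:ℚ) ≤ K.aQ i * K.aQ j := mul_nonneg (K.aQ_pos i).le (K.aQ_pos j).le
      have h4 : (0:ℚ) ≤ (z i - z j)^2 := sq_nonneg _
      have h5 : (0:ℚ) ≤ -(K.d i * (K.A i j : ℚ)) := by nlinarith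
      show (0:ℚ) ≤ (-(K.d i * (K.A i j : ℚ))) * (K.aQ i * K.aQ j) * (z i - z j)^2
      exact mul_nonneg (mul_nonneg h5 h3) h4
  have ht0 : ∀ i j, t i j = 0 := by
    intro i j
    have h1 : ∀ i ∈ (Finset.univ : Finset (Fin (l+1))), (0:ℚ) ≤ ∑ j, t i j :=
      fun i _ => Finset.sum_nonneg fun j _ => htnn i j
    have hrows : ∀ i, ∑ j, t i j = 0 :=
      fun i => (Finset.sum_eq_zero_iff_of_nonneg h1).mp hS i (Finset.mem_univ i)
    have h2 : ∀ j ∈ (Finset.univ : Finset (Fin (l+1))), (0:ℚ) ≤ t i j := fun j _ => htnn i j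
    exact (Finset.sum_eq_zero_iff_of_nonneg h2).mp (hrows i) j (Finset.mem_univ j)
  have key : ∀ i j, (K.A i j : ℚ) ≠ 0 → z i = z j := by
    intro i j hA
    rcases eq_or_ne i j with rfl | hij
    · rfl
    · have h : (-(K.d i * (K.A i j : ℚ))) * (K.aQ i * K.aQ j) * (z i - z j)^2 = 0 := ht0 i j
      have f1 : -(K.d i * (K.A i j : ℚ)) ≠ 0 := by
        have := (K.d_pos i).ne'
        intro hcon
        apply hA
        have := neg_eq_zero.mp hcon
        exact (mul_eq_zero.mp this).resolve_left ‹K.d i ≠ 0›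
      have f2 : K.aQ i * K.aQ j ≠ 0 :=
        mul_ne_zero (K.aQ_pos i).ne' (K.aQ_pos j).ne'
      have : (z i - z j)^2 = 0 := by
        rcases mul_eq_zero.mp h with h' | h'
        · rcases mul_eq_zero.mp h' with h'' | h''
          · exact absurd h'' f1
          · exact absurd h'' f2
        · exact h'
      have := pow_eq_zero_iff (n := 2) (by norm_num) |>.mp this
      linarith [sub_eq_zero.mp this]
  obtain hS0 | hS0 := K.indec {i | z i = z 0} (by
    intro i hi j hj
    by_contra hA
    apply hj
    have : z i = z j := key i j (by exact_mod_cast hA)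
    rw [Set.mem_setOf_eq] at hi ⊢
    rw [← this, hi])
  · exfalso
    have : (0 : Fin (l+1)) ∈ ({i | z i = z 0} : Set (Fin (l+1))) := rfl
    rw [hS0] at this
    exact this
  · refine ⟨z 0, fun i => ?_⟩
    have hi : z i = z 0 := by
      have : i ∈ ({i | z i = z 0} : Set (Fin (l+1))) := by rw [hS0]; trivial
      exact this
    rw [hcz i, hi]
    ring

end AffineGCM
namespace AffineGCM

variable {l : ℕ} (K : AffineGCM l)

lemma kerA0 (c : Fin (l+1) → ℚ)
    (hc : ∀ k : Fin l, ∑ i, c i * (K.d i * (K.A i k.succ : ℚ)) = 0) :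
    ∃ μ : ℚ, ∀ i, c i = μ * K.aQ i := by
  have h1 : ∀ k : Fin l, ∑ i, (K.A k.succ i : ℚ) * c i = 0 := by
    intro k
    have he : ∀ i, c i * (K.d i * (K.A i k.succ : ℚ))
        = K.d k.succ * ((K.A k.succ i : ℚ) * c i) := by
      intro i
      have hs := K.dsymm i k.succ
      linear_combination c i * hs
    have := hc k
    rw [Finset.sum_congr rfl (fun i _ => he i), ← Finset.mul_sum] at this
    rcases mul_eq_zero.mp this with h | h
    · exact absurd h (K.d_pos k.succ).ne'
    · exact h
  have h0 : ∑ i, (K.A 0 i : ℚ) * c i = 0 := by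
    have hsum : ∑ k, (K.d k * K.aQ k) * (∑ i, (K.A k i : ℚ) * c i) = 0 := by
      have swap : ∑ k, (K.d k * K.aQ k) * (∑ i, (K.A k i : ℚ) * c i)
          = ∑ i, c i * (∑ k, (K.d k * K.aQ k) * (K.A k i : ℚ)) := by
        simp_rw [Finset.mul_sum]
        rw [Finset.sum_comm]
        exact Finset.sum_congr rfl fun i _ => Finset.sum_congr rfl fun k _ => by ring
      rw [swap]
      refine Finset.sum_eq_zero fun i _ => ?_
      rw [K.leftnullQ i, mul_zero]
    rw [Fin.sum_univ_succ] at hsum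
    have hz : ∑ k : Fin l, (K.d k.succ * K.aQ k.succ) * (∑ i, (K.A k.succ i : ℚ) * c i) = 0 :=
      Finset.sum_eq_zero fun k _ => by rw [h1 k, mul_zero]
    rw [hz, add_zero] at hsum
    rcases mul_eq_zero.mp hsum with h | h
    · exact absurd h (by have h1 := K.d_pos 0; have h2 := K.aQ_pos 0; positivity)
    · exact h
  refine K.kerA c (fun i => ?_)
  rcases Fin.eq_zero_or_eq_succ i with rfl | ⟨k, rfl⟩
  · exact h0
  · exact h1 k

/-- auxiliary square matrix over ℚ: first row `v`, other rows the symmetrized columns. -/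
def VM (v : Fin (l+1) → ℚ) : Matrix (Fin (l+1)) (Fin (l+1)) ℚ :=
  fun k i => Fin.cases (v i) (fun k' => K.d i * (K.A i k'.succ : ℚ)) k

lemma VM_det_ne_zero (v : Fin (l+1) → ℚ)
    (hv : ∀ μ : ℚ, (∑ i, v i * (μ * K.aQ i)) = 0 → μ = 0) :
    (K.VM v).det ≠ 0 := by
  intro hdet
  obtain ⟨c, hc0, hc⟩ := (Matrix.exists_mulVec_eq_zero_iff).mpr hdet
  have hrow : ∀ k, ∑ i, K.VM v k i * c i = 0 := by
    intro k
    have := congrFun hc k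
    simpa [Matrix.mulVec, dotProduct] using this
  have hsucc : ∀ k : Fin l, ∑ i, c i * (K.d i * (K.A i k.succ : ℚ)) = 0 := by
    intro k
    have := hrow k.succ
    simp only [VM, Fin.cases_succ] at this
    rw [← this]
    exact Finset.sum_congr rfl fun i _ => by ring
  obtain ⟨μ, hμ⟩ := K.kerA0 c hsucc
  have h0 : ∑ i, v i * (μ * K.aQ i) = 0 := by
    have := hrow 0
    simp only [VM, Fin.cases_zero] at this
    rw [← this]
    exact Finset.sum_congr rfl fun i _ => by rw [hμ i]
  have : μ = 0 := hv μ h0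
  apply hc0
  funext i
  rw [hμ i, this, zero_mul]
  simp

/-- the complex version of `VM`. -/
def VC (v : Fin (l+1) → ℚ) : Matrix (Fin (l+1)) (Fin (l+1)) ℂ :=
  (K.VM v).map (fun q => (q : ℂ))

lemma VC_det_ne_zero (v : Fin (l+1) → ℚ)
    (hv : ∀ μ : ℚ, (∑ i, v i * (μ * K.aQ i)) = 0 → μ = 0) :
    (K.VC v).det ≠ 0 := by
  have : (K.VC v).det = ((K.VM v).det : ℂ) := by
    unfold VC
    rw [show (K.VM v).map (fun q => (q : ℂ)) = (Rat.castHom ℂ).mapMatrix (K.VM v) from rfl,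
      ← RingHom.map_det]
    rfl
  rw [this]
  exact_mod_cast K.VM_det_ne_zero v hv

lemma VC_inj (v : Fin (l+1) → ℚ)
    (hv : ∀ μ : ℚ, (∑ i, v i * (μ * K.aQ i)) = 0 → μ = 0)
    (c c' : Fin (l+1) → ℂ) (h : (K.VC v).mulVec c = (K.VC v).mulVec c') : c = c' := by
  have hker : (K.VC v).mulVec (c - c') = 0 := by
    rw [Matrix.mulVec_sub, h, sub_self]
  by_contra hne
  have : (K.VC v).det = 0 := by
    rw [← Matrix.exists_mulVec_eq_zero_iff]
    exact ⟨c - c', sub_ne_zero.mpr (fun hcc => hne (by rw [hcc])) , hker⟩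
  exact K.VC_det_ne_zero v hv this

lemma VC_surj (v : Fin (l+1) → ℚ)
    (hv : ∀ μ : ℚ, (∑ i, v i * (μ * K.aQ i)) = 0 → μ = 0)
    (y : Fin (l+1) → ℂ) : ∃ c, (K.VC v).mulVec c = y := by
  refine ⟨(K.VC v)⁻¹.mulVec y, ?_⟩
  rw [Matrix.mulVec_mulVec, Matrix.mul_nonsing_inv _ (isUnit_iff_ne_zero.mpr (K.VC_det_ne_zero v hv)), Matrix.one_mulVec]

lemma VC_row_zero (v : Fin (l+1) → ℚ) (c : Fin (l+1) → ℂ) :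
    (K.VC v).mulVec c 0 = ∑ i, (v i : ℂ) * c i := by
  simp [VC, VM, Matrix.mulVec, dotProduct]

lemma VC_row_succ (v : Fin (l+1) → ℚ) (c : Fin (l+1) → ℂ) (k : Fin l) :
    (K.VC v).mulVec c k.succ = ∑ i, c i * K.B i k.succ := by
  simp only [VC, VM, Matrix.mulVec, dotProduct, Matrix.map_apply, Fin.cases_succ]
  refine Finset.sum_congr rfl fun i _ => ?_
  unfold B
  push_cast
  ring

/-- the standard weight vector for `VM`. -/
def vda (i : Fin (l+1)) : ℚ := K.d i * K.aQ i

lemma vda_cond : ∀ μ : ℚ, (∑ i, K.vda i * (μ * K.aQ i)) = 0 → μ = 0 := by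
  intro μ h
  have he : ∀ i, K.vda i * (μ * K.aQ i) = μ * (K.d i * K.aQ i * K.aQ i) := by
    intro i; unfold vda; ring
  rw [Finset.sum_congr rfl (fun i _ => he i), ← Finset.mul_sum] at h
  rcases mul_eq_zero.mp h with h | h
  · exact h
  · exfalso
    have : (0:ℚ) < ∑ i, K.d i * K.aQ i * K.aQ i := by
      apply Finset.sum_pos
      · intro i _
        have := K.d_pos i; have := K.aQ_pos i
        positivity
      · exact Finset.univ_nonempty
    rw [h] at this
    exact lt_irrefl 0 this

lemma one_cond : ∀ μ : ℚ, (∑ i, (1:ℚ) * (μ * K.aQ i)) = 0 → μ = 0 := by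
  intro μ h
  simp_rw [one_mul, ← Finset.mul_sum] at h
  rcases mul_eq_zero.mp h with h | h
  · exact h
  · exfalso
    have : (0:ℚ) < ∑ i, K.aQ i := Finset.sum_pos (fun i _ => K.aQ_pos i) Finset.univ_nonempty
    rw [h] at this
    exact lt_irrefl 0 this

lemma KER_C (c : Fin (l+1) → ℂ)
    (hc : ∀ j : Fin l, ∑ i, c i * K.B i j.succ = 0) :
    ∃ μ : ℂ, ∀ i, c i = μ * (K.label i : ℂ) := by
  set t : ℂ := ∑ i, (K.vda i : ℂ) * c i with ht
  set s : ℚ := ∑ i, K.vda i * K.aQ i with hs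
  have hs_pos : 0 < s := by
    rw [hs]
    refine Finset.sum_pos (fun i _ => ?_) Finset.univ_nonempty
    have := K.d_pos i; have := K.aQ_pos i
    unfold vda
    positivity
  set μ : ℂ := t / (s : ℂ) with hμ
  have hEq : (K.VC K.vda).mulVec c = (K.VC K.vda).mulVec (fun i => μ * (K.label i : ℂ)) := by
    funext k
    rcases Fin.eq_zero_or_eq_succ k with rfl | ⟨k', rfl⟩
    · rw [K.VC_row_zero, K.VC_row_zero]
      have hcast : ((s:ℚ):ℂ) = ∑ i, (K.vda i : ℂ) * (K.label i : ℂ) := by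
        rw [hs]
        push_cast [aQ]
        rfl
      have h2 : ∑ i, (K.vda i : ℂ) * (μ * (K.label i : ℂ)) = μ * (s:ℂ) := by
        rw [hcast, Finset.mul_sum]
        exact Finset.sum_congr rfl fun i _ => by ring
      rw [h2, hμ, div_mul_cancel₀ _ (show ((s:ℚ):ℂ) ≠ 0 by exact_mod_cast hs_pos.ne')]
    · rw [K.VC_row_succ, K.VC_row_succ, hc k']
      have : ∀ i, μ * (K.label i : ℂ) * K.B i k'.succ
          = μ * ((K.label i : ℂ) * K.B i k'.succ) := fun i => by ring
      rw [Finset.sum_congr rfl (fun i _ => this i), ← Finset.mul_sum]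
      have hz : ∑ i, (K.label i : ℂ) * K.B i k'.succ = 0 := by
        have hq := K.leftnullQ k'.succ
        have : ((∑ i, (K.d i * K.aQ i) * (K.A i k'.succ : ℚ) : ℚ) : ℂ) = 0 := by
          rw [hq]; norm_num
        push_cast at this
        rw [← this]
        refine Finset.sum_congr rfl fun i _ => ?_
        unfold B aQ
        push_cast
        ring
      rw [hz, mul_zero]
  have := K.VC_inj K.vda K.vda_cond c _ hEq
  exact ⟨μ, fun i => congrFun this i⟩

lemma SUR1 (r : Fin l → ℂ) :
    ∃ c : Fin (l+1) → ℂ, ∀ j : Fin l, ∑ i, c i * K.B i j.succ = r j := by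
  obtain ⟨c, hc⟩ := K.VC_surj K.vda K.vda_cond (Fin.cases 0 r)
  refine ⟨c, fun j => ?_⟩
  rw [← K.VC_row_succ, hc]
  simp

lemma SUR2 (r : Fin l → ℂ) :
    ∃ c : Fin (l+1) → ℂ, (∑ i, c i = 0) ∧ ∀ j : Fin l, ∑ i, c i * K.B i j.succ = r j := by
  obtain ⟨c, hc⟩ := K.VC_surj (fun _ => (1:ℚ)) K.one_cond (Fin.cases 0 r)
  refine ⟨c, ?_, fun j => ?_⟩
  · have := K.VC_row_zero (fun _ => (1:ℚ)) c
    rw [hc] at this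
    simpa using this.symm
  · rw [← K.VC_row_succ, hc]
    simp

lemma sumB_label (k : Fin (l+1)) : ∑ i, (K.label i : ℂ) * K.B i k = 0 := by
  have hq := K.leftnullQ k
  have : ((∑ i, (K.d i * K.aQ i) * (K.A i k : ℚ) : ℚ) : ℂ) = 0 := by rw [hq]; norm_num
  push_cast at this
  rw [← this]
  refine Finset.sum_congr rfl fun i _ => ?_
  unfold B aQ
  push_cast
  ring

end AffineGCM
section PolyInfra

variable {l : ℕ}

/-- levels below `n` -/
def Lev (l n : ℕ) : Set (Fin l × ℕ) := {p | p.2 < n}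

lemma Lev_mono {n m : ℕ} (h : n ≤ m) : Lev l n ⊆ Lev l m :=
  fun _ hp => lt_of_lt_of_le hp h

/-- the principal weight -/
def wt (l : ℕ) : Fin l × ℕ → ℤ := fun p => (p.2 : ℤ) + 1

lemma weight_single_wt (p : Fin l × ℕ) (k : ℕ) :
    (Finsupp.weight (wt l) (Finsupp.single p k) : ℤ) = k • wt l p := by
  rw [Finsupp.weight_apply, Finsupp.sum_single_index (by simp)]

lemma pa_X (p : Fin l × ℕ) : pa l (X p) = X (p.1, p.2 + 1) := by
  unfold pa
  rw [mkDerivation_X]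

lemma deriv_zero_on_supported (R : Derivation ℂ (Pi0 l) (Pi0 l)) (S : Set (Fin l × ℕ))
    (h : ∀ p ∈ S, R (X p) = 0) {P : Pi0 l} (hP : P ∈ supported ℂ S) : R P = 0 := by
  rw [supported_eq_adjoin_X] at hP
  induction hP using Algebra.adjoin_induction with
  | mem x hx =>
    obtain ⟨p, hp, rfl⟩ := hx
    exact h p hp
  | algebraMap r => exact R.map_algebraMap r
  | add x y hx hy ihx ihy => rw [map_add, ihx, ihy, add_zero]
  | mul x y hx hy ihx ihy => rw [R.leibniz, ihx, ihy, smul_zero, smul_zero, add_zero]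

lemma pa_mem_supported {n : ℕ} {P : Pi0 l} (hP : P ∈ supported ℂ (Lev l n)) :
    pa l P ∈ supported ℂ (Lev l (n+1)) := by
  have hmono : supported ℂ (Lev l n) ≤ supported ℂ (Lev l (n+1)) :=
    supported_mono (Lev_mono (Nat.le_succ n))
  rw [supported_eq_adjoin_X] at hP
  induction hP using Algebra.adjoin_induction with
  | mem x hx =>
    obtain ⟨p, hp, rfl⟩ := hx
    rw [pa_X]
    refine X_mem_supported.mpr ?_
    exact Nat.succ_lt_succ hp
  | algebraMap r =>
    rw [(pa l).map_algebraMap]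
    exact Subalgebra.zero_mem _
  | add x y hx hy ihx ihy =>
    rw [map_add]; exact Subalgebra.add_mem _ ihx ihy
  | mul x y hx hy ihx ihy =>
    rw [(pa l).leibniz, smul_eq_mul, smul_eq_mul]
    have hx' : x ∈ supported ℂ (Lev l (n+1)) := hmono (by rwa [supported_eq_adjoin_X])
    have hy' : y ∈ supported ℂ (Lev l (n+1)) := hmono (by rwa [supported_eq_adjoin_X])
    exact Subalgebra.add_mem _ (Subalgebra.mul_mem _ hx' ihy) (Subalgebra.mul_mem _ hy' ihx)

lemma deriv_eq_sum_pderiv (R : Derivation ℂ (Pi0 l) (Pi0 l)) (s : Finset (Fin l × ℕ))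
    {P : Pi0 l} (hP : P ∈ supported ℂ (↑s : Set (Fin l × ℕ))) :
    R P = ∑ p ∈ s, R (X p) * pderiv p P := by
  rw [supported_eq_adjoin_X] at hP
  induction hP using Algebra.adjoin_induction with
  | mem x hx =>
    obtain ⟨p, hp, rfl⟩ := hx
    rw [Finset.sum_eq_single_of_mem p hp
      (fun q _ hq => by rw [pderiv_X_of_ne (Ne.symm hq), mul_zero])]
    rw [pderiv_X_self, mul_one]
  | algebraMap r =>
    rw [R.map_algebraMap]
    have : ∀ p : Fin l × ℕ, pderiv p ((algebraMap ℂ (Pi0 l)) r) = 0 := by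
      intro p
      rw [show ((algebraMap ℂ (Pi0 l)) r) = C r from rfl, pderiv_C]
    rw [Finset.sum_congr rfl (fun p _ => by rw [this p, mul_zero])]
    rw [Finset.sum_const_zero]
  | add x y hx hy ihx ihy =>
    rw [map_add, ihx, ihy, ← Finset.sum_add_distrib]
    refine Finset.sum_congr rfl fun p _ => ?_
    rw [map_add]
    ring
  | mul x y hx hy ihx ihy =>
    rw [R.leibniz, smul_eq_mul, smul_eq_mul, ihx, ihy]
    rw [Finset.mul_sum, Finset.mul_sum, ← Finset.sum_add_distrib]
    refine Finset.sum_congr rfl fun p _ => ?_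
    rw [(pderiv p).leibniz, smul_eq_mul, smul_eq_mul]
    ring

lemma pderiv_ne_zero_of_mem_vars {P : Pi0 l} {p : Fin l × ℕ} (hp : p ∈ P.vars) :
    pderiv p P ≠ 0 := by
  classical
  obtain ⟨m, hm, hmp⟩ := (mem_vars p).mp hp
  intro hzero
  have hrw : (pderiv p) P
      = ∑ m' ∈ P.support, monomial (m' - Finsupp.single p 1) (coeff m' P * (m' p : ℂ)) := by
    conv_lhs => rw [P.as_sum]
    rw [map_sum]
    exact Finset.sum_congr rfl fun m' _ => pderiv_monomial
  have hco : coeff (m - Finsupp.single p 1) (pderiv p P) = (coeff m P) * (m p : ℂ) := by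
    rw [hrw, coeff_sum]
    rw [Finset.sum_congr rfl (fun m' _ => coeff_monomial _ _ _)]
    rw [Finset.sum_eq_single_of_mem m hm]
    · rw [if_pos rfl]
    · intro m' _ hne
      rcases eq_or_ne (m' p) 0 with h0 | h0
      · split_ifs with h
        · rw [h0]; simp
        · rfl
      · rw [if_neg]
        intro heq
        apply hne
        have h1 : Finsupp.single p 1 ≤ m' := by
          rw [Finsupp.single_le_iff]
          omega
        have h2 : Finsupp.single p 1 ≤ m := by
          rw [Finsupp.single_le_iff]
          exact Nat.one_le_iff_ne_zero.mpr (Finsupp.mem_support_iff.mp hmp)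
        calc m' = m' - Finsupp.single p 1 + Finsupp.single p 1 := (tsub_add_cancel_of_le h1).symm
        _ = m - Finsupp.single p 1 + Finsupp.single p 1 := by rw [heq]
        _ = m := tsub_add_cancel_of_le h2
  rw [hzero, coeff_zero] at hco
  have h1 : coeff m P ≠ 0 := mem_support_iff.mp hm
  have h2 : (m p : ℂ) ≠ 0 := Nat.cast_ne_zero.mpr (Finsupp.mem_support_iff.mp hmp)
  exact (mul_ne_zero h1 h2) hco.symm

/-- a derivation raising/lowering weighted degree by `e` on generators does so on all
homogeneous polynomials. -/
lemma deriv_isWeightedHomogeneous (R : Derivation ℂ (Pi0 l) (Pi0 l)) (e : ℤ)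
    (hR : ∀ p : Fin l × ℕ, (R (X p)).IsWeightedHomogeneous (wt l) (wt l p + e))
    {P : Pi0 l} {dd : ℤ} (hP : P.IsWeightedHomogeneous (wt l) dd) :
    (R P).IsWeightedHomogeneous (wt l) (dd + e) := by
  classical
  have hXpow : ∀ (p : Fin l × ℕ) (k : ℕ),
      (X p ^ k : Pi0 l).IsWeightedHomogeneous (wt l) (k • (wt l p)) := by
    intro p k
    rw [X_pow_eq_monomial]
    exact isWeightedHomogeneous_monomial _ _ _ (weight_single_wt p k)
  have key : ∀ (m : (Fin l × ℕ) →₀ ℕ) (c : ℂ),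
      (R (monomial m c)).IsWeightedHomogeneous (wt l)
        ((Finsupp.weight (wt l) m : ℤ) + e) := by
    intro m
    induction m using Finsupp.induction with
    | zero =>
      intro c
      rw [← C_apply, show (C c : Pi0 l) = algebraMap ℂ (Pi0 l) c from rfl, R.map_algebraMap]
      exact isWeightedHomogeneous_zero ℂ _ _
    | single_add p k f hpf hk ih =>
      intro c
      rw [monomial_single_add, R.leibniz, smul_eq_mul, smul_eq_mul]
      have hRXpow : (R (X p ^ k)).IsWeightedHomogeneous (wt l) (k • (wt l p) + e) := by
        rw [R.leibniz_pow]
        have h1 : (((X p : Pi0 l) ^ (k-1)) • R (X p)).IsWeightedHomogeneous (wt l)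
            ((k-1 : ℕ) • (wt l p) + (wt l p + e)) := by
          rw [smul_eq_mul]
          exact (hXpow p (k-1)).mul (hR p)
        have h2 : (k • (((X p : Pi0 l) ^ (k-1)) • R (X p))).IsWeightedHomogeneous (wt l)
            ((k-1 : ℕ) • (wt l p) + (wt l p + e)) :=
          (weightedHomogeneousSubmodule ℂ (wt l) _).toAddSubmonoid.nsmul_mem h1 k
        have heq : (k-1 : ℕ) • (wt l p) + (wt l p + e) = k • (wt l p) + e := by
          have hk1 : k - 1 + 1 = k := Nat.succ_pred_eq_of_pos (Nat.pos_of_ne_zero hk)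
          rw [← hk1]
          push_cast [add_smul, one_smul, smul_eq_mul]
          ring
        rwa [heq] at h2
      have hmono : ((monomial f) c : Pi0 l).IsWeightedHomogeneous (wt l)
          (Finsupp.weight (wt l) f) := isWeightedHomogeneous_monomial _ _ _ rfl
      have hsum : (Finsupp.weight (wt l) (Finsupp.single p k + f) : ℤ)
          = k • (wt l p) + Finsupp.weight (wt l) f := by
        rw [map_add, weight_single_wt]
      rw [hsum]
      have t1 : (X p ^ k * R ((monomial f) c)).IsWeightedHomogeneous (wt l)
          (k • (wt l p) + ((Finsupp.weight (wt l) f : ℤ) + e)) := (hXpow p k).mul (ih c)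
      have t2 : ((monomial f) c * R (X p ^ k)).IsWeightedHomogeneous (wt l)
          ((Finsupp.weight (wt l) f : ℤ) + (k • (wt l p) + e)) := hmono.mul hRXpow
      have e1 : k • (wt l p) + ((Finsupp.weight (wt l) f : ℤ) + e)
          = k • (wt l p) + (Finsupp.weight (wt l) f : ℤ) + e := by ring
      have e2 : (Finsupp.weight (wt l) f : ℤ) + (k • (wt l p) + e)
          = k • (wt l p) + (Finsupp.weight (wt l) f : ℤ) + e := by ring
      rw [e1] at t1
      rw [e2] at t2
      exact t1.add t2
  conv_lhs => rw [P.as_sum]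
  rw [map_sum]
  apply IsWeightedHomogeneous.sum
  intro m hm
  have hww : (Finsupp.weight (wt l) m : ℤ) = dd := hP (mem_support_iff.mp hm)
  rw [← hww]
  exact key m (coeff m P)

end PolyInfra
namespace AffineGCM

variable {l : ℕ} (K : AffineGCM l)

lemma Q_X (i : Fin (l+1)) (p : Fin l × ℕ) :
    K.Q i (X p) = -(K.B i p.1.succ) • K.FdB i p.2 := by
  unfold Q
  rw [mkDerivation_X]

lemma Uv_succ (k : Fin l) (n : ℕ) : K.Uv k.succ n = X (k, n) := by
  unfold Uv u
  rw [Fin.cases_succ]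

lemma Uv_zero (n : ℕ) :
    K.Uv 0 n = -(1 / (K.label 0 : ℂ)) • ∑ k : Fin l, (K.label k.succ : ℂ) • X (k, n) := by
  unfold Uv u
  rw [Fin.cases_zero]

lemma pa_Uv (i : Fin (l+1)) (n : ℕ) : pa l (K.Uv i n) = K.Uv i (n+1) := by
  rcases Fin.eq_zero_or_eq_succ i with rfl | ⟨k, rfl⟩
  · rw [Uv_zero, Uv_zero, Derivation.map_smul, map_sum]
    congr 1
    refine Finset.sum_congr rfl fun k _ => ?_
    rw [Derivation.map_smul, pa_X]
  · rw [Uv_succ, Uv_succ, pa_X]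

lemma Uv_mem (i : Fin (l+1)) (n : ℕ) : K.Uv i n ∈ supported ℂ (Lev l (n+1)) := by
  rcases Fin.eq_zero_or_eq_succ i with rfl | ⟨k, rfl⟩
  · rw [Uv_zero]
    refine Subalgebra.smul_mem _ (Subalgebra.sum_mem _ fun k _ => Subalgebra.smul_mem _ ?_ _) _
    exact X_mem_supported.mpr (Nat.lt_succ_self n)
  · rw [Uv_succ]
    exact X_mem_supported.mpr (Nat.lt_succ_self n)

lemma FdB_mem (i : Fin (l+1)) (n : ℕ) : K.FdB i n ∈ supported ℂ (Lev l n) := by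
  induction n with
  | zero => exact Subalgebra.one_mem _
  | succ n ih =>
    show -(K.Uv i 0) * K.FdB i n + pa l (K.FdB i n) ∈ _
    refine Subalgebra.add_mem _ (Subalgebra.mul_mem _ (Subalgebra.neg_mem _ ?_) ?_)
      (pa_mem_supported ih)
    · exact supported_mono (Lev_mono (Nat.one_le_iff_ne_zero.mpr (Nat.succ_ne_zero n))) (K.Uv_mem i 0)
    · exact supported_mono (Lev_mono (Nat.le_succ n)) ih

set_option maxHeartbeats 1000000 in
lemma FdB_succ_add_Uv_mem (i : Fin (l+1)) (n : ℕ) :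
    K.FdB i (n+1) + K.Uv i n ∈ supported ℂ (Lev l n) := by
  induction n with
  | zero =>
    have h1 : K.FdB i 1 = -(K.Uv i 0) := by
      show -(K.Uv i 0) * K.FdB i 0 + pa l (K.FdB i 0) = -(K.Uv i 0)
      show -(K.Uv i 0) * 1 + pa l 1 = -(K.Uv i 0)
      rw [mul_one, (pa l).map_one_eq_zero, add_zero]
    rw [h1, neg_add_cancel]
    exact Subalgebra.zero_mem _
  | succ n ih =>
    have h1 : K.FdB i (n+2) + K.Uv i (n+1)
        = -(K.Uv i 0) * K.FdB i (n+1) + pa l (K.FdB i (n+1) + K.Uv i n) := by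
      rw [map_add, pa_Uv]
      show -(K.Uv i 0) * K.FdB i (n+1) + pa l (K.FdB i (n+1)) + K.Uv i (n+1) = _
      ring
    rw [h1]
    have m1 : K.Uv i 0 ∈ supported ℂ (Lev l (n+1)) :=
      supported_mono (Lev_mono (show (1:ℕ) ≤ n+1 by omega)) (K.Uv_mem i 0)
    have m2 : K.FdB i (n+1) ∈ supported ℂ (Lev l (n+1)) := K.FdB_mem i (n+1)
    exact Subalgebra.add_mem _ (Subalgebra.mul_mem _ (Subalgebra.neg_mem _ m1) m2)
      (pa_mem_supported ih)

lemma Uv_hom (i : Fin (l+1)) (n : ℕ) :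
    (K.Uv i n).IsWeightedHomogeneous (wt l) ((n : ℤ) + 1) := by
  have hX : ∀ k : Fin l, (X (k, n) : Pi0 l).IsWeightedHomogeneous (wt l) ((n : ℤ) + 1) :=
    fun k => isWeightedHomogeneous_X ℂ (wt l) (k, n)
  rcases Fin.eq_zero_or_eq_succ i with rfl | ⟨k, rfl⟩
  · rw [Uv_zero]
    refine (weightedHomogeneousSubmodule ℂ (wt l) _).smul_mem _
      ((weightedHomogeneousSubmodule ℂ (wt l) _).sum_mem fun k _ =>
        (weightedHomogeneousSubmodule ℂ (wt l) _).smul_mem _ (hX k))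
  · rw [Uv_succ]
    exact hX k

lemma pa_hom {P : Pi0 l} {dd : ℤ} (hP : P.IsWeightedHomogeneous (wt l) dd) :
    (pa l P).IsWeightedHomogeneous (wt l) (dd + 1) := by
  refine deriv_isWeightedHomogeneous (pa l) 1 (fun p => ?_) hP
  rw [pa_X]
  have := isWeightedHomogeneous_X ℂ (wt l) (p.1, p.2 + 1)
  have heq : wt l (p.1, p.2+1) = wt l p + 1 := by
    show ((p.2 + 1 : ℕ) : ℤ) + 1 = ((p.2 : ℤ) + 1) + 1
    push_cast
    ring
  rwa [heq] at this

lemma FdB_hom (i : Fin (l+1)) (n : ℕ) :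
    (K.FdB i n).IsWeightedHomogeneous (wt l) (n : ℤ) := by
  induction n with
  | zero => exact isWeightedHomogeneous_one ℂ (wt l)
  | succ n ih =>
    show (-(K.Uv i 0) * K.FdB i n + pa l (K.FdB i n)).IsWeightedHomogeneous _ _
    have h1 : ((-(K.Uv i 0)) * K.FdB i n).IsWeightedHomogeneous (wt l) (((0:ℕ):ℤ)+1 + n) :=
      IsWeightedHomogeneous.mul
        ((weightedHomogeneousSubmodule ℂ (wt l) _).neg_mem (K.Uv_hom i 0)) ih
    have h2 := pa_hom ih
    have e1 : ((0:ℕ):ℤ) + 1 + (n:ℤ) = ((n+1 : ℕ) : ℤ) := by push_cast; ring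
    have e2 : (n:ℤ) + 1 = ((n+1 : ℕ) : ℤ) := by push_cast; ring
    rw [e1] at h1
    rw [e2] at h2
    exact h1.add h2

lemma Q_hom (i : Fin (l+1)) (p : Fin l × ℕ) :
    (K.Q i (X p)).IsWeightedHomogeneous (wt l) (wt l p + (-1)) := by
  rw [Q_X]
  have h := (weightedHomogeneousSubmodule ℂ (wt l) _).smul_mem (-(K.B i p.1.succ))
    (K.FdB_hom i p.2)
  have e : (p.2 : ℤ) = wt l p + (-1) := by
    show (p.2 : ℤ) = ((p.2 : ℤ) + 1) + (-1)
    ring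
  rwa [e] at h

lemma cc_pa (P : Pi0 l) : constantCoeff (pa l P) = 0 := by
  induction P using MvPolynomial.induction_on with
  | C c =>
    rw [show (C c : Pi0 l) = algebraMap ℂ (Pi0 l) c from rfl, (pa l).map_algebraMap, map_zero]
  | add p q ihp ihq => rw [map_add, map_add, ihp, ihq, add_zero]
  | mul_X p q ih =>
    rw [(pa l).leibniz, smul_eq_mul, smul_eq_mul, map_add, map_mul, map_mul, pa_X,
      constantCoeff_X, constantCoeff_X]
    ring

lemma cc_Uv_zero (i : Fin (l+1)) : constantCoeff (K.Uv i 0) = 0 := by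
  rcases Fin.eq_zero_or_eq_succ i with rfl | ⟨k, rfl⟩
  · rw [Uv_zero, smul_eq_C_mul, map_mul]
    have : constantCoeff (∑ k : Fin l, (K.label k.succ : ℂ) • (X (k, 0) : Pi0 l)) = 0 := by
      rw [map_sum]
      refine Finset.sum_eq_zero fun k _ => ?_
      rw [smul_eq_C_mul, map_mul, constantCoeff_X, mul_zero]
    rw [this, mul_zero]
  · rw [Uv_succ, constantCoeff_X]

lemma cc_FdB (i : Fin (l+1)) (n : ℕ) :
    constantCoeff (K.FdB i n) = if n = 0 then 1 else 0 := by
  induction n with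
  | zero => simp [FdB]
  | succ n ih =>
    show constantCoeff (-(K.Uv i 0) * K.FdB i n + pa l (K.FdB i n)) = _
    rw [map_add, map_mul, map_neg, cc_Uv_zero, cc_pa, neg_zero, zero_mul, zero_add]
    simp

lemma lemC (V : Pi0 l) :
    ∑ i, (K.label i : ℂ) * constantCoeff (K.Q i V) = 0 := by
  induction V using MvPolynomial.induction_on with
  | C c =>
    refine Finset.sum_eq_zero fun i _ => ?_
    rw [show (C c : Pi0 l) = algebraMap ℂ (Pi0 l) c from rfl, (K.Q i).map_algebraMap, map_zero,
      mul_zero]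
  | add p q ihp ihq =>
    have : ∀ i : Fin (l+1), (K.label i : ℂ) * constantCoeff (K.Q i (p + q))
        = (K.label i : ℂ) * constantCoeff (K.Q i p)
          + (K.label i : ℂ) * constantCoeff (K.Q i q) := by
      intro i
      rw [map_add, map_add]
      ring
    rw [Finset.sum_congr rfl (fun i _ => this i), Finset.sum_add_distrib, ihp, ihq, add_zero]
  | mul_X p q ih =>
    have hterm : ∀ i : Fin (l+1), (K.label i : ℂ) * constantCoeff (K.Q i (p * X q))
        = constantCoeff p * (if q.2 = 0 then 1 else 0)
            * (-((K.label i : ℂ) * K.B i q.1.succ)) := by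
      intro i
      rw [(K.Q i).leibniz, smul_eq_mul, smul_eq_mul, map_add, map_mul, map_mul, constantCoeff_X,
        Q_X, smul_eq_C_mul, map_mul, constantCoeff_C, cc_FdB]
      ring
    rw [Finset.sum_congr rfl (fun i _ => hterm i), ← Finset.mul_sum]
    have : ∑ i, -((K.label i : ℂ) * K.B i q.1.succ) = 0 := by
      rw [Finset.sum_neg_distrib, K.sumB_label q.1.succ, neg_zero]
    rw [this, mul_zero]

end AffineGCM
namespace AffineGCM

variable {l : ℕ} (K : AffineGCM l)

lemma dsum_apply {ι : Type} (s : Finset ι) (f : ι → Derivation ℂ (Pi0 l) (Pi0 l)) (P : Pi0 l) :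
    (∑ i ∈ s, f i) P = ∑ i ∈ s, f i P := by
  induction s using Finset.cons_induction with
  | empty => rw [Finset.sum_empty, Finset.sum_empty, Derivation.zero_apply]
  | cons a s ha ih => rw [Finset.sum_cons, Finset.sum_cons, Derivation.add_apply, ih]

/-- the Lie algebra generated by the screening operators `Q_i`. -/
inductive InL (K : AffineGCM l) : Derivation ℂ (Pi0 l) (Pi0 l) → Prop
  | base (i : Fin (l+1)) : InL K (K.Q i)
  | add {R S : Derivation ℂ (Pi0 l) (Pi0 l)} : InL K R → InL K S → InL K (R + S)
  | smul (c : ℂ) {R : Derivation ℂ (Pi0 l) (Pi0 l)} : InL K R → InL K (c • R)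
  | lie {R S : Derivation ℂ (Pi0 l) (Pi0 l)} : InL K R → InL K S → InL K ⁅R, S⁆

lemma InL_zero : InL K (0 : Derivation ℂ (Pi0 l) (Pi0 l)) := by
  have := InL.smul (K := K) 0 (InL.base 0)
  rwa [zero_smul] at this

lemma InL_sum {ι : Type} (s : Finset ι) (f : ι → Derivation ℂ (Pi0 l) (Pi0 l))
    (h : ∀ i ∈ s, InL K (f i)) : InL K (∑ i ∈ s, f i) := by
  induction s using Finset.cons_induction with
  | empty => rw [Finset.sum_empty]; exact K.InL_zero
  | cons a s ha ih =>
    rw [Finset.sum_cons]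
    exact InL.add (h a (Finset.mem_cons_self a s)) (ih fun i hi => h i (Finset.mem_cons_of_mem hi))

lemma InL_kill {P : Pi0 l} (hP : ∀ i, K.Q i P = 0) {R : Derivation ℂ (Pi0 l) (Pi0 l)}
    (h : InL K R) : R P = 0 := by
  induction h with
  | base i => exact hP i
  | add h1 h2 ih1 ih2 => rw [Derivation.add_apply, ih1, ih2, add_zero]
  | smul c h ih => rw [Derivation.smul_apply, ih, smul_zero]
  | lie h1 h2 ih1 ih2 => rw [Derivation.commutator_apply, ih1, ih2, map_zero, map_zero, sub_zero]

lemma eq_linear_of_hom_one {W : Pi0 l} (h : W.IsWeightedHomogeneous (wt l) 1) :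
    ∃ t : Fin l → ℂ, W = ∑ k : Fin l, t k • X (k, 0) := by
  classical
  have hm1 : ∀ m ∈ W.support, ∃ k : Fin l, m = Finsupp.single ((k, 0) : Fin l × ℕ) 1 := by
    intro m hm
    have hw : (Finsupp.weight (wt l) m : ℤ) = 1 := h (mem_support_iff.mp hm)
    rw [Finsupp.weight_apply] at hw
    have hsum : ∑ q ∈ m.support, (m q : ℤ) * ((q.2 : ℤ) + 1) = 1 := by
      have heq : (Finsupp.sum m fun i c => c • wt l i)
          = ∑ q ∈ m.support, (m q : ℤ) * ((q.2 : ℤ) + 1) := by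
        rw [Finsupp.sum]
        refine Finset.sum_congr rfl fun q _ => ?_
        rw [nsmul_eq_mul]
        rfl
      rw [← heq]
      exact hw
    have hpos : ∀ q ∈ m.support, 1 ≤ (m q : ℤ) * ((q.2 : ℤ) + 1) := by
      intro q hq
      have h1 : 1 ≤ (m q : ℤ) := by
        exact_mod_cast Nat.one_le_iff_ne_zero.mpr (Finsupp.mem_support_iff.mp hq)
      have h2 : (1:ℤ) ≤ (q.2 : ℤ) + 1 := by omega
      nlinarith
    have hne : m.support.Nonempty := by
      rcases Finset.eq_empty_or_nonempty m.support with he | hne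
      · rw [he, Finset.sum_empty] at hsum; exact absurd hsum (by norm_num)
      · exact hne
    obtain ⟨p, hp⟩ := hne
    have hsub : m.support = {p} := by
      apply Finset.eq_singleton_iff_unique_mem.mpr
      refine ⟨hp, fun q hq => ?_⟩
      by_contra hqp
      have h2 : (2:ℤ) ≤ ∑ q ∈ m.support, (m q : ℤ) * ((q.2 : ℤ) + 1) := by
        have hsub2 : ({q, p} : Finset (Fin l × ℕ)) ⊆ m.support := by
          intro x hx
          rcases Finset.mem_insert.mp hx with rfl | hx
          · exact hq
          · rwa [Finset.mem_singleton.mp hx]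
        calc (2:ℤ) = ∑ x ∈ ({q, p} : Finset (Fin l × ℕ)), 1 := by
              rw [Finset.sum_const, Finset.card_insert_of_notMem (by simpa using hqp),
                Finset.card_singleton]
              norm_num
        _ ≤ ∑ x ∈ ({q, p} : Finset (Fin l × ℕ)), (m x : ℤ) * ((x.2 : ℤ) + 1) :=
              Finset.sum_le_sum fun x hx => hpos x (hsub2 hx)
        _ ≤ ∑ q ∈ m.support, (m q : ℤ) * ((q.2 : ℤ) + 1) :=
              Finset.sum_le_sum_of_subset_of_nonneg hsub2
                (fun x hx _ => le_trans (by norm_num) (hpos x hx))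
      omega
    have hval : (m p : ℤ) * ((p.2 : ℤ) + 1) = 1 := by
      rw [hsub, Finset.sum_singleton] at hsum
      exact hsum
    have hmp1 : m p = 1 ∧ p.2 = 0 := by
      have h1 : 1 ≤ (m p : ℤ) := by
        exact_mod_cast Nat.one_le_iff_ne_zero.mpr (Finsupp.mem_support_iff.mp hp)
      have h2 : (0:ℤ) ≤ (p.2 : ℤ) := by omega
      constructor
      · nlinarith
      · nlinarith
    refine ⟨p.1, ?_⟩
    have hps : p = (p.1, 0) := by
      ext
      · rfl
      · exact hmp1.2
    have := (Finsupp.support_eq_singleton.mp hsub).2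
    rw [this, hmp1.1, hps]
  refine ⟨fun k => coeff (Finsupp.single ((k,0) : Fin l × ℕ) 1) W, ?_⟩
  apply MvPolynomial.ext
  intro m
  rw [show coeff m (∑ k : Fin l, coeff (Finsupp.single ((k,0) : Fin l × ℕ) 1) W • X (k, 0))
      = ∑ k : Fin l, coeff (Finsupp.single ((k,0) : Fin l × ℕ) 1) W * coeff m (X (k,0)) from by
    rw [coeff_sum]
    exact Finset.sum_congr rfl fun k _ => coeff_smul m _ _]
  rcases eq_or_ne (coeff m W) 0 with h0 | h0
  · rw [h0]
    symm
    refine Finset.sum_eq_zero fun k _ => ?_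
    rw [coeff_X']
    split_ifs with hh
    · rw [hh, h0, mul_one]
    · rw [mul_zero]
  · obtain ⟨k0, hk0⟩ := hm1 m (mem_support_iff.mpr h0)
    rw [Finset.sum_eq_single_of_mem k0 (Finset.mem_univ k0)]
    · rw [coeff_X', if_pos hk0.symm, mul_one, hk0]
    · intro k _ hk
      rw [coeff_X', if_neg, mul_zero]
      rw [hk0]
      intro hcon
      apply hk
      have := Finsupp.single_left_injective (by norm_num : (1:ℕ) ≠ 0) hcon
      exact (Prod.mk.injEq _ _ _ _).mp this |>.1

end AffineGCM
namespace AffineGCM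

variable {l : ℕ} (K : AffineGCM l)

lemma Q_C (i : Fin (l+1)) (x : ℂ) : K.Q i (C x) = 0 := by
  rw [show (C x : Pi0 l) = algebraMap ℂ (Pi0 l) x from rfl, (K.Q i).map_algebraMap]

lemma FdB_zero (i : Fin (l+1)) : K.FdB i 0 = 1 := rfl

lemma exists_triangular (N : ℕ) (r : Fin l → ℂ) :
    ∃ R : Derivation ℂ (Pi0 l) (Pi0 l), InL K R ∧
      (∀ p : Fin l × ℕ, (R (X p)).IsWeightedHomogeneous (wt l) (wt l p + (-(N:ℤ) - 1))) ∧
      (∀ p : Fin l × ℕ, p.2 < N → R (X p) = 0) ∧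
      (∀ j : Fin l, R (X (j, N)) = C (r j)) := by
  induction N generalizing r with
  | zero =>
    obtain ⟨c, hc⟩ := K.SUR1 (fun j => - r j)
    refine ⟨∑ i, c i • K.Q i, K.InL_sum _ _ (fun i _ => InL.smul _ (InL.base i)), ?_, ?_, ?_⟩
    · intro p
      rw [dsum_apply]
      refine IsWeightedHomogeneous.sum _ _ _ (fun i _ => ?_)
      rw [Derivation.smul_apply]
      have h1 := (weightedHomogeneousSubmodule ℂ (wt l) _).smul_mem (c i) (K.Q_hom i p)
      have e : wt l p + (-1 : ℤ) = wt l p + (-((0:ℕ):ℤ) - 1) := by push_cast; ring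
      rwa [e] at h1
    · intro p hp
      exact absurd hp (Nat.not_lt_zero _)
    · intro j
      rw [dsum_apply]
      have hterm : ∀ i : Fin (l+1), (c i • K.Q i) (X (j, 0)) = C (c i * -(K.B i j.succ)) := by
        intro i
        rw [Derivation.smul_apply, K.Q_X]
        show c i • (-(K.B i j.succ) • (K.FdB i 0)) = _
        rw [K.FdB_zero, smul_smul, smul_eq_C_mul, mul_one]
      rw [Finset.sum_congr rfl (fun i _ => hterm i), ← map_sum]
      congr 1
      have h2 : ∑ i, c i * -(K.B i j.succ) = -∑ i, c i * K.B i j.succ := by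
        rw [← Finset.sum_neg_distrib]
        exact Finset.sum_congr rfl fun i _ => by ring
      rw [h2, hc j, neg_neg]
  | succ N ih =>
    obtain ⟨cS, hcS0, hcS⟩ := K.SUR2 r
    set r' : Fin l → ℂ := fun k => -(cS k.succ) / (K.label k.succ : ℂ) with hr'
    obtain ⟨R, hRin, hRhom, hRlow, hRlev⟩ := ih r'
    set rt : Fin (l+1) → ℂ :=
      fun i => Fin.cases (-(1 / (K.label 0 : ℂ)) * ∑ k : Fin l, (K.label k.succ : ℂ) * r' k)
        (fun k => r' k) i with hrt
    have hlabel_ne : ∀ i : Fin (l+1), (K.label i : ℂ) ≠ 0 :=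
      fun i => Nat.cast_ne_zero.mpr (K.label_pos i).ne'
    have hart : ∀ i, (K.label i : ℂ) * rt i = -(cS i) := by
      intro i
      rcases Fin.eq_zero_or_eq_succ i with rfl | ⟨k, rfl⟩
      · rw [hrt]
        simp only [Fin.cases_zero]
        have h1 : ∀ k : Fin l, (K.label k.succ : ℂ) * r' k = -(cS k.succ) := by
          intro k
          rw [hr']
          show (K.label k.succ : ℂ) * (-(cS k.succ) / (K.label k.succ : ℂ)) = -(cS k.succ)
          rw [mul_comm, div_mul_cancel₀ _ (hlabel_ne k.succ)]
        rw [Finset.sum_congr rfl (fun k _ => h1 k), Finset.sum_neg_distrib]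
        have hsum0 : ∑ k : Fin l, cS k.succ = -(cS 0) := by
          have h2 := hcS0
          rw [Fin.sum_univ_succ] at h2
          linear_combination h2
        rw [hsum0]
        have h0 := hlabel_ne 0
        field_simp
      · rw [hrt]
        simp only [Fin.cases_succ]
        rw [hr']
        show (K.label k.succ : ℂ) * (-(cS k.succ) / (K.label k.succ : ℂ)) = -(cS k.succ)
        rw [mul_comm, div_mul_cancel₀ _ (hlabel_ne k.succ)]
    have hRkill : ∀ {P : Pi0 l}, P ∈ supported ℂ (Lev l N) → R P = 0 := by
      intro P hP
      exact deriv_zero_on_supported R (Lev l N) (fun q hq => hRlow q hq) hP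
    have hRFdB : ∀ (i : Fin (l+1)) (m : ℕ), m ≤ N → R (K.FdB i m) = 0 := by
      intro i m hm
      exact hRkill (supported_mono (Lev_mono hm) (K.FdB_mem i m))
    have hRUv : ∀ i : Fin (l+1), R (K.Uv i N) = C (rt i) := by
      intro i
      rcases Fin.eq_zero_or_eq_succ i with rfl | ⟨k, rfl⟩
      · rw [K.Uv_zero, Derivation.map_smul, map_sum]
        rw [Finset.sum_congr rfl (fun k _ => by rw [Derivation.map_smul, hRlev k])]
        have h1 : ∀ k : Fin l, (K.label k.succ : ℂ) • (C (r' k) : Pi0 l)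
            = C ((K.label k.succ : ℂ) * r' k) := by
          intro k; rw [smul_eq_C_mul, ← C_mul]
        rw [Finset.sum_congr rfl (fun k _ => h1 k), ← map_sum, smul_eq_C_mul, ← C_mul]
        rw [hrt]
        simp only [Fin.cases_zero]
      · rw [K.Uv_succ, hRlev k, hrt]
        simp only [Fin.cases_succ]
    have hRFdBsucc : ∀ i : Fin (l+1), R (K.FdB i (N+1)) = - C (rt i) := by
      intro i
      have h1 : R (K.FdB i (N+1) + K.Uv i N) = 0 := hRkill (K.FdB_succ_add_Uv_mem i N)
      rw [map_add, hRUv i] at h1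
      linear_combination h1
    refine ⟨∑ i, (K.label i : ℂ) • ⁅K.Q i, R⁆,
      K.InL_sum _ _ (fun i _ => InL.smul _ (InL.lie (InL.base i) hRin)), ?_, ?_, ?_⟩
    · intro p
      rw [dsum_apply]
      refine IsWeightedHomogeneous.sum _ _ _ (fun i _ => ?_)
      rw [Derivation.smul_apply]
      refine (weightedHomogeneousSubmodule ℂ (wt l) _).smul_mem _ ?_
      rw [Derivation.commutator_apply]
      refine (weightedHomogeneousSubmodule ℂ (wt l) _).sub_mem ?_ ?_
      · have h1 := deriv_isWeightedHomogeneous (K.Q i) (-1) (K.Q_hom i) (hRhom p)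
        have e : wt l p + (-(N:ℤ)-1) + (-1) = wt l p + (-((N+1:ℕ):ℤ) - 1) := by push_cast; ring
        rwa [e] at h1
      · have h1 := deriv_isWeightedHomogeneous R (-(N:ℤ)-1) hRhom (K.Q_hom i p)
        have e : wt l p + (-1) + (-(N:ℤ)-1) = wt l p + (-((N+1:ℕ):ℤ) - 1) := by push_cast; ring
        rwa [e] at h1
    · rintro ⟨pj, pn⟩ hp
      rw [dsum_apply]
      refine Finset.sum_eq_zero fun i _ => ?_
      rw [Derivation.smul_apply, Derivation.commutator_apply]
      have h2 : R (K.Q i (X (pj, pn))) = 0 := by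
        rw [K.Q_X, Derivation.map_smul]
        have h3 : R (K.FdB i ((pj, pn) : Fin l × ℕ).2) = 0 := hRFdB i pn (by omega)
        rw [h3, smul_zero]
      have h1 : K.Q i (R (X (pj, pn))) = 0 := by
        rcases Nat.lt_or_ge pn N with hlt | hge
        · rw [hRlow (pj, pn) hlt, map_zero]
        · have hpn : pn = N := by omega
          subst hpn
          rw [hRlev pj, K.Q_C]
      rw [h1, h2, sub_zero, smul_zero]
    · intro j
      rw [dsum_apply]
      set W : Pi0 l := R (X (j, N+1)) with hW
      have hWhom : W.IsWeightedHomogeneous (wt l) 1 := by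
        have h1 := hRhom (j, N+1)
        have e : wt l (j, N+1) + (-(N:ℤ)-1) = 1 := by
          show ((N+1 : ℕ) : ℤ) + 1 + (-(N:ℤ)-1) = 1
          push_cast
          ring
        rwa [e] at h1
      obtain ⟨t, hts⟩ := eq_linear_of_hom_one hWhom
      have hQW : ∀ i : Fin (l+1), K.Q i W = C (∑ k : Fin l, t k * -(K.B i k.succ)) := by
        intro i
        have hterm2 : ∀ k : Fin l, K.Q i (t k • X (k, 0)) = C (t k * -(K.B i k.succ)) := by
          intro k
          rw [Derivation.map_smul, K.Q_X]
          show t k • (-(K.B i k.succ) • K.FdB i 0) = _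
          rw [K.FdB_zero, smul_smul, smul_eq_C_mul, mul_one]
        rw [hts, map_sum, Finset.sum_congr rfl (fun k _ => hterm2 k), ← map_sum]
      have hterm : ∀ i : Fin (l+1), ((K.label i : ℂ) • ⁅K.Q i, R⁆) (X (j, N+1))
          = C ((K.label i : ℂ) * (∑ k : Fin l, t k * -(K.B i k.succ))
              - (K.label i : ℂ) * (K.B i j.succ * rt i)) := by
        intro i
        rw [Derivation.smul_apply, Derivation.commutator_apply, ← hW, hQW i]
        have h2 : R (K.Q i (X (j, N+1))) = C (K.B i j.succ * rt i) := by
          rw [K.Q_X]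
          show R (-(K.B i j.succ) • K.FdB i (N+1)) = _
          rw [Derivation.map_smul, hRFdBsucc i, smul_neg, smul_eq_C_mul, ← C_mul, ← C_neg]
          congr 1
          ring
        rw [h2, ← C_sub, smul_eq_C_mul, ← C_mul]
        congr 1
        ring
      rw [Finset.sum_congr rfl (fun i _ => hterm i), ← map_sum]
      congr 1
      rw [Finset.sum_sub_distrib]
      have hzero : ∑ i, (K.label i : ℂ) * (∑ k : Fin l, t k * -(K.B i k.succ)) = 0 := by
        have hswap : ∑ i, (K.label i : ℂ) * (∑ k : Fin l, t k * -(K.B i k.succ))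
            = ∑ k : Fin l, (-(t k)) * (∑ i, (K.label i : ℂ) * K.B i k.succ) := by
          simp_rw [Finset.mul_sum]
          rw [Finset.sum_comm]
          exact Finset.sum_congr rfl fun k _ => Finset.sum_congr rfl fun i _ => by ring
        rw [hswap]
        refine Finset.sum_eq_zero fun k _ => ?_
        rw [K.sumB_label k.succ, mul_zero]
      have hfin : ∑ i, (K.label i : ℂ) * (K.B i j.succ * rt i) = -(r j) := by
        have h1 : ∀ i : Fin (l+1), (K.label i : ℂ) * (K.B i j.succ * rt i)
            = (((K.label i : ℂ) * rt i) * K.B i j.succ) := fun i => by ring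
        rw [Finset.sum_congr rfl (fun i _ => h1 i)]
        rw [Finset.sum_congr rfl (fun i _ => by rw [hart i])]
        have h2 : ∑ i, -(cS i) * K.B i j.succ = -∑ i, cS i * K.B i j.succ := by
          rw [← Finset.sum_neg_distrib]
          exact Finset.sum_congr rfl fun i _ => by ring
        rw [h2, hcS j]
      rw [hzero, hfin, zero_sub, neg_neg]

end AffineGCM
namespace AffineGCM

variable {l : ℕ} (K : AffineGCM l)

lemma claimA_aux (N : ℕ) : ∀ P : Pi0 l, (∀ i, K.Q i P = 0) → ((↑P.vars : Set (Fin l × ℕ)) ⊆ Lev l N) →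
    ∃ c : ℂ, P = C c := by
  induction N with
  | zero =>
    intro P hQ hv
    have h1 : P ∈ supported ℂ (∅ : Set (Fin l × ℕ)) := by
      rw [mem_supported]
      intro p hp
      exact absurd (hv hp) (Nat.not_lt_zero _)
    rw [supported_empty] at h1
    obtain ⟨c, hc⟩ := Algebra.mem_bot.mp h1
    exact ⟨c, hc.symm⟩
  | succ N ih =>
    intro P hQ hv
    have hder : ∀ j : Fin l, pderiv ((j, N) : Fin l × ℕ) P = 0 := by
      intro j
      obtain ⟨R, hRin, _, hRlow, hRlev⟩ := K.exists_triangular N (Pi.single j 1)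
      have h0 : R P = 0 := K.InL_kill hQ hRin
      have hchain := deriv_eq_sum_pderiv R (insert ((j,N) : Fin l × ℕ) P.vars)
        (supported_mono
          (by intro q hq; exact Finset.mem_coe.mpr (Finset.mem_insert_of_mem hq))
          (mem_supported_vars P))
      rw [h0] at hchain
      have hsingle : ∑ p ∈ insert ((j,N) : Fin l × ℕ) P.vars, R (X p) * pderiv p P
          = R (X ((j, N) : Fin l × ℕ)) * pderiv ((j,N) : Fin l × ℕ) P := by
        refine Finset.sum_eq_single_of_mem _ (Finset.mem_insert_self _ _) ?_
        rintro ⟨qj, qn⟩ hq hne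
        have hqv : ((qj, qn) : Fin l × ℕ) ∈ P.vars := by
          rcases Finset.mem_insert.mp hq with h | h
          · exact absurd h hne
          · exact h
        have hqn : qn < N + 1 := hv hqv
        rcases Nat.lt_or_ge qn N with hlt | hge
        · rw [hRlow (qj, qn) hlt, zero_mul]
        · have hN : qn = N := by omega
          subst hN
          have hj : qj ≠ j := fun hcon => hne (by rw [hcon])
          rw [hRlev qj, Pi.single_eq_of_ne hj, map_zero, zero_mul]
      rw [hsingle, hRlev j, Pi.single_eq_same] at hchain
      have h2 := hchain.symm
      rwa [map_one, one_mul] at h2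
    have hv' : (↑P.vars : Set (Fin l × ℕ)) ⊆ Lev l N := by
      rintro ⟨qj, qn⟩ hq
      have h1 : qn < N + 1 := hv hq
      show qn < N
      rcases Nat.lt_or_ge qn N with hlt | hge
      · exact hlt
      · exfalso
        have hN : qn = N := by omega
        subst hN
        exact pderiv_ne_zero_of_mem_vars (Finset.mem_coe.mp hq) (hder qj)
    exact ih P hQ hv'

lemma claimA (P : Pi0 l) (hQ : ∀ i, K.Q i P = 0) : ∃ c : ℂ, P = C c := by
  refine K.claimA_aux ((P.vars.sup fun p => p.2) + 1) P hQ ?_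
  intro p hp
  have h1 : p.2 ≤ P.vars.sup (fun p => p.2) :=
    Finset.le_sup (f := fun p : Fin l × ℕ => p.2) (Finset.mem_coe.mp hp)
  show p.2 < _
  omega

end AffineGCM

theorem no_invariant_vector_fields' (l : ℕ) (hl : 1 ≤ l) (K : AffineGCM l)
    (D : Derivation ℂ (Pi0 l) (Pi0 l))
    (hD : ∀ (i : Fin (l+1)) (P : Pi0 l), D (K.Q i P) = K.Q i (D P)) :
    D = 0 := by
  have hlabel_ne : ∀ i : Fin (l+1), (K.label i : ℂ) ≠ 0 :=
    fun i => Nat.cast_ne_zero.mpr (K.label_pos i).ne'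
  have key : ∀ n : ℕ, ∀ j : Fin l, D (X ((j, n) : Fin l × ℕ)) = 0 := by
    intro n
    induction n using Nat.strong_induction_on with
    | _ n IH =>
    have hkill : ∀ {P : Pi0 l}, P ∈ supported ℂ (Lev l n) → D P = 0 := by
      intro P hP
      refine deriv_zero_on_supported D (Lev l n) (fun q hq => ?_) hP
      exact IH q.2 hq q.1
    have hconst : ∀ j : Fin l, ∃ c, D (X ((j, n) : Fin l × ℕ)) = C c := by
      intro j
      apply K.claimA
      intro i
      rw [← hD i (X ((j, n) : Fin l × ℕ)), K.Q_X]
      show D (-(K.B i j.succ) • K.FdB i n) = 0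
      rw [Derivation.map_smul, hkill (K.FdB_mem i n), smul_zero]
    choose lam hlam using hconst
    set lt0 : ℂ := -(1 / (K.label 0 : ℂ)) * ∑ k : Fin l, (K.label k.succ : ℂ) * lam k with hlt0
    set lamT : Fin (l+1) → ℂ := fun i => Fin.cases lt0 (fun k => lam k) i with hlamT
    have hUv : ∀ i : Fin (l+1), D (K.Uv i n) = C (lamT i) := by
      intro i
      rcases Fin.eq_zero_or_eq_succ i with rfl | ⟨k, rfl⟩
      · rw [K.Uv_zero, Derivation.map_smul, map_sum]
        rw [Finset.sum_congr rfl (fun k _ => by rw [Derivation.map_smul, hlam k])]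
        have h1 : ∀ k : Fin l, (K.label k.succ : ℂ) • (C (lam k) : Pi0 l)
            = C ((K.label k.succ : ℂ) * lam k) := by
          intro k; rw [smul_eq_C_mul, ← C_mul]
        rw [Finset.sum_congr rfl (fun k _ => h1 k), ← map_sum, smul_eq_C_mul, ← C_mul]
        rw [hlamT]
        simp only [Fin.cases_zero]
        rfl
      · rw [K.Uv_succ, hlam k, hlamT]
        simp only [Fin.cases_succ]
    have hQV : ∀ (i : Fin (l+1)) (j : Fin l),
        K.Q i (D (X ((j, n+1) : Fin l × ℕ))) = C (K.B i j.succ * lamT i) := by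
      intro i j
      rw [← hD i (X ((j, n+1) : Fin l × ℕ)), K.Q_X]
      show D (-(K.B i j.succ) • K.FdB i (n+1)) = _
      have hF : D (K.FdB i (n+1)) = - C (lamT i) := by
        have h1 : D (K.FdB i (n+1) + K.Uv i n) = 0 := hkill (K.FdB_succ_add_Uv_mem i n)
        rw [map_add, hUv i] at h1
        linear_combination h1
      rw [Derivation.map_smul, hF, smul_neg, smul_eq_C_mul, ← C_mul, ← C_neg]
      congr 1
      ring
    have hsum : ∀ j : Fin l, ∑ i, ((K.label i : ℂ) * lamT i) * K.B i j.succ = 0 := by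
      intro j
      have h1 := K.lemC (D (X ((j, n+1) : Fin l × ℕ)))
      rw [Finset.sum_congr rfl (fun i _ => by rw [hQV i j, constantCoeff_C])] at h1
      rw [← h1]
      exact Finset.sum_congr rfl fun i _ => by ring
    obtain ⟨μ, hμ⟩ := K.KER_C (fun i => (K.label i : ℂ) * lamT i) hsum
    have hlamT_eq : ∀ i, lamT i = μ := by
      intro i
      have h1 := hμ i
      rw [mul_comm μ _] at h1
      exact mul_left_cancel₀ (hlabel_ne i) h1
    have hlam_eq : ∀ k : Fin l, lam k = μ := by
      intro k
      have h1 := hlamT_eq k.succ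
      rw [hlamT] at h1
      simpa using h1
    set S : ℂ := ∑ k : Fin l, (K.label k.succ : ℂ) with hS
    have hstep : μ = -(1 / (K.label 0 : ℂ)) * (S * μ) := by
      have h1 : lt0 = μ := by
        have h := hlamT_eq 0
        rw [hlamT] at h
        simpa using h
      have h2 : lt0 = -(1 / (K.label 0 : ℂ)) * (S * μ) := by
        rw [hlt0, hS, Finset.sum_mul]
        congr 1
        exact Finset.sum_congr rfl fun k _ => by rw [hlam_eq k]
      rw [h1] at h2
      exact h2
    have h4 : μ * ((K.label 0 : ℂ) + S) = 0 := by
      have h5 : (K.label 0 : ℂ) * μ = (K.label 0 : ℂ) * (-(1 / (K.label 0 : ℂ)) * (S * μ)) := by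
        rw [← hstep]
      have h6 : (K.label 0 : ℂ) * (-(1 / (K.label 0 : ℂ)) * (S * μ)) = -(S * μ) := by
        field_simp
        rw [mul_assoc, mul_div_cancel_left₀ _ (hlabel_ne 0)]
      rw [h6] at h5
      linear_combination h5
    have hposne : ((K.label 0 : ℂ) + S) ≠ 0 := by
      rw [hS]
      have hnat : ((K.label 0 + ∑ k : Fin l, K.label k.succ : ℕ) : ℂ)
          = (K.label 0 : ℂ) + ∑ k : Fin l, (K.label k.succ : ℂ) := by push_cast; ring
      rw [← hnat]
      refine Nat.cast_ne_zero.mpr ?_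
      have := K.label_pos 0
      omega
    have hμ0 : μ = 0 := by
      rcases mul_eq_zero.mp h4 with h | h
      · exact h
      · exact absurd h hposne
    intro j
    rw [hlam j, hlam_eq j, hμ0, map_zero]
  apply MvPolynomial.derivation_ext
  intro p
  rw [Derivation.zero_apply]
  obtain ⟨j, n⟩ := p
  exact key n j

/-- a `ℂ`-derivation of `π₀` commuting with all the `Q_i` is zero. -/
theorem no_invariant_vector_fields (l : ℕ) (hl : 1 ≤ l) (K : AffineGCM l)
    (D : Derivation ℂ (Pi0 l) (Pi0 l))
    (hD : ∀ (i : Fin (l+1)) (P : Pi0 l), D (K.Q i P) = K.Q i (D P)) :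
    D = 0 :=
  no_invariant_vector_fields' l hl K D hD
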